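/- Let A be a countable alphabet, P a probability distribution on A, and D a proper and almost surely complete dictionary over A. Then for every positive integer m the sandwich inequalities -∑_{α∈D, |α|<m} P(α) log₂ P(α) ≤ H(D_m) ≤ H(D) hold, and consequently lim_{m→∞} H(D_m) = H(D), where H(E) = -∑_{α∈E} P(α) log₂ P(α) (sums in [0,∞]) and D_m = {α ∈ D : |α| < m} ∪ {α ∈ D : |α| = m} ∪ T_m with T_m = {α ∈ A^m : no β ∈ D is a prefix of α}. -/

import Mathlib

open scoped ENNReal
open Filter

/-- The probability of a finite string, obtained by extending the
distribution `P` multiplicatively: `P(a₁⋯aₙ) = ∏ᵢ P(aᵢ)`. -/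
noncomputable def strProb {A : Type*} (P : PMF A) (l : List A) : ℝ≥0∞ :=
  (l.map fun a => P a).prod

/-- A dictionary is a set of nonempty finite strings. -/
def IsDictionary {A : Type*} (D : Set (List A)) : Prop :=
  ∀ α ∈ D, α ≠ []

/-- A dictionary is proper if no string in it is a (proper) prefix of
another string in it. -/
def IsProper {A : Type*} (D : Set (List A)) : Prop :=
  ∀ α ∈ D, ∀ β ∈ D, α <+: β → α = β

/-- A dictionary is complete if every infinite sequence over `A` has a
prefix in it. -/
def IsCompleteDict {A : Type*} (D : Set (List A)) : Prop :=
  ∀ x : ℕ → A, ∃ α ∈ D, α = (List.range α.length).map x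

/-- The probability that the length-`n` prefix of a random infinite sequence
has some prefix belonging to `D`. -/
noncomputable def prefixProb {A : Type*} (P : PMF A) (D : Set (List A)) (n : ℕ) : ℝ≥0∞ :=
  ∑' γ : {γ : List A // γ.length = n ∧ ∃ β ∈ D, β <+: γ}, strProb P γ

/-- `D` is almost surely complete: under the infinite product measure `P^ℕ`,
the event that an infinite sequence has a prefix in `D` has probability `1`.
(By continuity from below, this probability is the limit, as `n → ∞`, of the
probability that the length-`n` prefix has a prefix in `D`.) -/
def IsASC {A : Type*} (P : PMF A) (D : Set (List A)) : Prop :=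
  Tendsto (prefixProb P D) atTop (nhds 1)

/-- `Tset D n` = strings of length `n` having no prefix in `D`. -/
def Tset {A : Type*} (D : Set (List A)) (n : ℕ) : Set (List A) :=
  {α | α.length = n ∧ ∀ β ∈ D, ¬ β <+: α}

/-- `Dperp D n = {α ∈ D : |α| = n} ∪ Tₙ`. -/
def Dperp {A : Type*} (D : Set (List A)) (n : ℕ) : Set (List A) :=
  {α ∈ D | α.length = n} ∪ Tset D n

/-- `Dn D n = {α ∈ D : |α| < n} ∪ Dₙ^⊥`. -/
def Dn {A : Type*} (D : Set (List A)) (n : ℕ) : Set (List A) :=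
  {α ∈ D | α.length < n} ∪ Dperp D n

/-- The one-letter extensions `αA = {αa : a ∈ A}` of a string `α`. -/
def oneExt {A : Type*} (α : List A) : Set (List A) :=
  {l | ∃ a : A, l = α ++ [a]}

/-- The extension `D[α] = (D \ {α}) ∪ αA` of a dictionary at `α`. -/
def extendDict {A : Type*} (D : Set (List A)) (α : List A) : Set (List A) :=
  (D \ {α}) ∪ oneExt α

/-- The nonnegative entropy contribution `-p log₂ p ∈ [0,∞]` of a
probability value `p`. -/
noncomputable def entTerm (p : ℝ≥0∞) : ℝ≥0∞ :=
  ENNReal.ofReal (-(p.toReal * Real.logb 2 p.toReal))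

/-- The entropy `H(E) = -∑_{α∈E} P(α) log₂ P(α)` of a dictionary, in `[0,∞]`. -/
noncomputable def dictEntropy {A : Type*} (P : PMF A) (E : Set (List A)) : ℝ≥0∞ :=
  ∑' α : E, entTerm (strProb P α)

/-- The average length `l̄(E) = ∑_{α∈E} P(α)|α|` of a dictionary, in `[0,∞]`. -/
noncomputable def avgLen {A : Type*} (P : PMF A) (E : Set (List A)) : ℝ≥0∞ :=
  ∑' α : E, strProb P α * (α : List A).length

/-- The source entropy `H(P) = -∑_{a∈A} P(a) log₂ P(a)`, in `[0,∞]`. -/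
noncomputable def srcEntropy {A : Type*} (P : PMF A) : ℝ≥0∞ :=
  ∑' a : A, entTerm (P a)


section StrProbAux
variable {A : Type*} (P : PMF A)

lemma strProb_nil : strProb P ([] : List A) = 1 := by simp [strProb]

lemma strProb_cons (a : A) (l : List A) : strProb P (a :: l) = P a * strProb P l := by
  simp [strProb]

lemma strProb_append (l l' : List A) :
    strProb P (l ++ l') = strProb P l * strProb P l' := by
  simp [strProb]

lemma strProb_le_one (l : List A) : strProb P l ≤ 1 := by
  induction l with
  | nil => simp [strProb_nil]
  | cons a t ih =>
    rw [strProb_cons]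
    calc P a * strProb P t ≤ 1 * 1 := mul_le_mul' (P.coe_le_one a) ih
    _ = 1 := one_mul 1

lemma strProb_ne_top (l : List A) : strProb P l ≠ ⊤ :=
  ne_top_of_le_ne_top ENNReal.one_ne_top (strProb_le_one P l)

lemma strProb_prefix_le {l l' : List A} (h : l <+: l') :
    strProb P l' ≤ strProb P l := by
  obtain ⟨t, rfl⟩ := h
  rw [strProb_append]
  calc strProb P l * strProb P t ≤ strProb P l * 1 :=
        mul_le_mul_right (strProb_le_one P t) _
  _ = strProb P l := mul_one _

def lenEquiv (A : Type*) (k : ℕ) :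
    {δ : List A // δ.length = k + 1} ≃ A × {δ : List A // δ.length = k} where
  toFun δ := match δ with
    | ⟨[], h⟩ => absurd h (by simp)
    | ⟨a :: t, h⟩ => (a, ⟨t, by simpa using h⟩)
  invFun p := ⟨p.1 :: p.2.1, by simp [p.2.2]⟩
  left_inv := by
    rintro ⟨(_|⟨a,t⟩), h⟩
    · simp at h
    · rfl
  right_inv := by rintro ⟨a, t, h⟩; simp

lemma sum_len (k : ℕ) :
    ∑' δ : {δ : List A // δ.length = k}, strProb P δ.1 = 1 := by
  induction k with
  | zero =>
    rw [tsum_eq_single (⟨[], rfl⟩ : {δ : List A // δ.length = 0})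
      (by rintro ⟨δ, h⟩ hb; exact absurd (Subtype.ext (List.length_eq_zero_iff.mp h)) hb)]
    exact strProb_nil P
  | succ k ih =>
    rw [← Equiv.tsum_eq (lenEquiv A k).symm (fun δ => strProb P δ.1)]
    have : ∀ p : A × {δ : List A // δ.length = k},
        strProb P ((lenEquiv A k).symm p).1 = P p.1 * strProb P p.2.1 := by
      rintro ⟨a, t, ht⟩; simp [lenEquiv, strProb_cons]
    simp_rw [this]
    rw [ENNReal.tsum_prod (f := fun (a : A) (b : {δ : List A // δ.length = k}) => P a * strProb P (b : List A))]
    simp_rw [ENNReal.tsum_mul_left]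
    simp_rw [ih]
    simpa using P.tsum_coe

def extEquiv (β : List A) (n : ℕ) (h : β.length ≤ n) :
    {γ : List A // γ.length = n ∧ β <+: γ} ≃ {δ : List A // δ.length = n - β.length} where
  toFun γ := ⟨γ.1.drop β.length, by rw [List.length_drop, γ.2.1]⟩
  invFun δ := ⟨β ++ δ.1, ⟨by rw [List.length_append, δ.2]; omega, ⟨δ.1, rfl⟩⟩⟩
  left_inv := by rintro ⟨γ, hlen, t, rfl⟩; simp
  right_inv := by rintro ⟨δ, hδ⟩; simp

lemma sum_ext (β : List A) (n : ℕ) (h : β.length ≤ n) :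
    ∑' γ : {γ : List A // γ.length = n ∧ β <+: γ}, strProb P γ.1 = strProb P β := by
  rw [← Equiv.tsum_eq (extEquiv β n h).symm (fun γ => strProb P γ.1)]
  have he : ∀ δ : {δ : List A // δ.length = n - β.length},
      strProb P ((extEquiv β n h).symm δ).1 = strProb P β * strProb P δ.1 := by
    rintro ⟨δ, hδ⟩; exact strProb_append P β δ
  simp_rw [he, ENNReal.tsum_mul_left, sum_len P, mul_one]

lemma tsum_set_mono {s t : Set (List A)} (f : List A → ℝ≥0∞) (h : s ⊆ t) :
    ∑' x : ↥s, f x ≤ ∑' x : ↥t, f x :=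
  ENNReal.tsum_comp_le_tsum_of_injective (Set.inclusion_injective h) (fun x : ↥t => f x)

lemma prefixProb_add_tset (D : Set (List A)) (n : ℕ) :
    prefixProb P D n + (∑' γ : ↥(Tset D n), strProb P γ.1) = 1 := by
  have hs : ({γ : List A | γ.length = n ∧ ∃ β ∈ D, β <+: γ} ∪ Tset D n) = {γ | γ.length = n} := by
    ext γ; constructor
    · rintro (⟨h1, _⟩ | ⟨h1, _⟩) <;> exact h1
    · intro h; by_cases hc : ∃ β ∈ D, β <+: γ
      · exact Or.inl ⟨h, hc⟩
      · refine Or.inr ⟨h, ?_⟩; push_neg at hc; exact hc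
  have hd : Disjoint {γ : List A | γ.length = n ∧ ∃ β ∈ D, β <+: γ} (Tset D n) := by
    rw [Set.disjoint_left]; rintro γ ⟨_, β, hβ, hpre⟩ ⟨_, hno⟩; exact hno β hβ hpre
  calc prefixProb P D n + (∑' γ : ↥(Tset D n), strProb P γ.1)
      = ∑' γ : ↥({γ : List A | γ.length = n ∧ ∃ β ∈ D, β <+: γ} ∪ Tset D n),
          strProb P γ.1 :=
        (Summable.tsum_union_disjoint hd ENNReal.summable ENNReal.summable).symm
    _ = 1 := by rw [hs]; exact sum_len P n

lemma tset_tendsto (D : Set (List A)) (hasc : IsASC P D) :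
    Filter.Tendsto (fun n => ∑' γ : ↥(Tset D n), strProb P γ.1) Filter.atTop (nhds 0) := by
  have h1 : ∀ n, (∑' γ : ↥(Tset D n), strProb P γ.1) = 1 - prefixProb P D n := by
    intro n
    have h := prefixProb_add_tset P D n
    have ha : prefixProb P D n ≠ ⊤ := by
      intro htop
      rw [htop] at h
      simp at h
    exact ENNReal.eq_sub_of_add_eq ha (by rw [add_comm]; exact h)
  simp_rw [h1]
  have := ENNReal.Tendsto.sub
    (tendsto_const_nhds : Filter.Tendsto (fun _ : ℕ => (1:ℝ≥0∞)) Filter.atTop (nhds 1))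
    hasc (Or.inl ENNReal.one_ne_top)
  simpa using this

lemma key (D : Set (List A)) (hprop : IsProper D) (hasc : IsASC P D)
    {m : ℕ} {α : List A} (hα : α ∈ Tset D m) :
    strProb P α ≤ ∑' β : ↥{β ∈ D | α <+: β}, strProb P β.1 := by
  obtain ⟨hlen, hno⟩ := hα
  -- for each n ≥ m, strProb P α ≤ fiber sum + tset sum
  have main : ∀ n, m ≤ n → strProb P α ≤
      (∑' β : ↥{β ∈ D | α <+: β}, strProb P β.1) +
      (∑' γ : ↥(Tset D n), strProb P γ.1) := by
    intro n hn
    have hsplit : ({γ : List A | (γ.length = n ∧ α <+: γ) ∧ ∃ β ∈ D, β <+: γ} ∪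
        {γ : List A | (γ.length = n ∧ α <+: γ) ∧ ¬∃ β ∈ D, β <+: γ}) =
        {γ : List A | γ.length = n ∧ α <+: γ} := by
      ext γ; constructor
      · rintro (⟨h1, _⟩ | ⟨h1, _⟩) <;> exact h1
      · intro h; by_cases hc : ∃ β ∈ D, β <+: γ
        · exact Or.inl ⟨h, hc⟩
        · exact Or.inr ⟨h, hc⟩
    have hd : Disjoint {γ : List A | (γ.length = n ∧ α <+: γ) ∧ ∃ β ∈ D, β <+: γ}
        {γ : List A | (γ.length = n ∧ α <+: γ) ∧ ¬∃ β ∈ D, β <+: γ} := by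
      rw [Set.disjoint_left]; rintro γ ⟨_, hc⟩ ⟨_, hnc⟩; exact hnc hc
    have h0 : strProb P α = ∑' γ : ↥({γ : List A | (γ.length = n ∧ α <+: γ) ∧ ∃ β ∈ D, β <+: γ} ∪
        {γ : List A | (γ.length = n ∧ α <+: γ) ∧ ¬∃ β ∈ D, β <+: γ}), strProb P γ.1 := by
      rw [hsplit]
      exact (sum_ext P α n (hlen ▸ hn)).symm
    rw [h0, Summable.tsum_union_disjoint hd ENNReal.summable ENNReal.summable]
    have hE2 : (∑' γ : ↥{γ : List A | (γ.length = n ∧ α <+: γ) ∧ ¬∃ β ∈ D, β <+: γ},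
        strProb P γ.1) ≤ ∑' γ : ↥(Tset D n), strProb P γ.1 := by
      apply tsum_set_mono
      rintro γ ⟨⟨h1, _⟩, h2⟩
      refine ⟨h1, ?_⟩
      intro β hβ hpre
      exact h2 ⟨β, hβ, hpre⟩
    have hE1 : (∑' γ : ↥{γ : List A | (γ.length = n ∧ α <+: γ) ∧ ∃ β ∈ D, β <+: γ},
        strProb P γ.1) ≤ ∑' β : ↥{β ∈ D | α <+: β}, strProb P β.1 := by
      -- map each γ to (its D-prefix, γ)
      have hDpfx : ∀ γ : ↥{γ : List A | (γ.length = n ∧ α <+: γ) ∧ ∃ β ∈ D, β <+: γ},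
          ∃ β, (β ∈ D ∧ α <+: β) ∧ β <+: γ.1 := by
        rintro ⟨γ, ⟨hγn, hαγ⟩, β, hβD, hβγ⟩
        refine ⟨β, ⟨hβD, ?_⟩, hβγ⟩
        rcases le_or_gt β.length α.length with hle | hlt
        · exact absurd (List.prefix_of_prefix_length_le hβγ hαγ hle) (hno β hβD)
        · exact List.prefix_of_prefix_length_le hαγ hβγ hlt.le
      let f : ↥{γ : List A | (γ.length = n ∧ α <+: γ) ∧ ∃ β ∈ D, β <+: γ} →
          Σ β : ↥{β ∈ D | α <+: β}, ↥{γ : List A | γ.length = n ∧ (β : List A) <+: γ} :=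
        fun γ => ⟨⟨(hDpfx γ).choose, (hDpfx γ).choose_spec.1⟩,
          ⟨γ.1, γ.2.1.1, (hDpfx γ).choose_spec.2⟩⟩
      have hinj : Function.Injective f := by
        intro x y h
        exact Subtype.ext (congrArg (fun p => p.2.1) h)
      calc (∑' γ : ↥{γ : List A | (γ.length = n ∧ α <+: γ) ∧ ∃ β ∈ D, β <+: γ}, strProb P γ.1)
          = ∑' γ, (fun p : Σ β : ↥{β ∈ D | α <+: β},
              ↥{γ : List A | γ.length = n ∧ (β : List A) <+: γ} => strProb P p.2.1) (f γ) := rfl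
        _ ≤ ∑' p : Σ β : ↥{β ∈ D | α <+: β}, ↥{γ : List A | γ.length = n ∧ (β : List A) <+: γ},
              strProb P p.2.1 := ENNReal.tsum_comp_le_tsum_of_injective hinj _
        _ = ∑' (β : ↥{β ∈ D | α <+: β}) (γ : ↥{γ : List A | γ.length = n ∧ (β : List A) <+: γ}),
              strProb P γ.1 := ENNReal.tsum_sigma' _
        _ ≤ ∑' β : ↥{β ∈ D | α <+: β}, strProb P β.1 := by
            apply ENNReal.tsum_le_tsum
            intro β
            by_cases hb : (β : List A).length ≤ n
            · exact le_of_eq (sum_ext P β n hb)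
            · have hempty : {γ : List A | γ.length = n ∧ (β : List A) <+: γ} = ∅ := by
                ext γ
                simp only [Set.mem_setOf_eq, Set.mem_empty_iff_false, iff_false, not_and]
                intro h1 h2
                have := h2.length_le
                omega
              rw [tsum_congr_set_coe _ hempty]
              simp
      done
    exact add_le_add hE1 hE2
  -- pass to the limit
  rcases eq_or_ne (∑' β : ↥{β ∈ D | α <+: β}, strProb P β.1) ⊤ with htop | htop
  · rw [htop]; exact le_top
  apply ENNReal.le_of_forall_pos_le_add
  intro ε hε _
  have hT := tset_tendsto P D hasc
  rw [ENNReal.tendsto_atTop_zero] at hT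
  obtain ⟨N, hN⟩ := hT ε (by exact_mod_cast hε)
  have := main (max m N) (le_max_left _ _)
  refine this.trans (add_le_add_right (hN _ (le_max_right _ _)) _)

lemma entTerm_eq {q : ℝ≥0∞} (hq : q ≤ 1) :
    entTerm q = q * ENNReal.ofReal (-(Real.logb 2 q.toReal)) := by
  have hqt : q ≠ ⊤ := ne_top_of_le_ne_top ENNReal.one_ne_top hq
  rw [entTerm, show -(q.toReal * Real.logb 2 q.toReal)
      = q.toReal * (-(Real.logb 2 q.toReal)) by ring,
    ENNReal.ofReal_mul ENNReal.toReal_nonneg, ENNReal.ofReal_toReal hqt]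

lemma entTerm_ge {p q : ℝ≥0∞} (hpq : p ≤ q) (hq : q ≤ 1) :
    p * ENNReal.ofReal (-(Real.logb 2 q.toReal)) ≤ entTerm p := by
  rcases eq_or_ne p 0 with rfl | h0
  · simp
  · rw [entTerm_eq (hpq.trans hq)]
    apply mul_le_mul_right
    apply ENNReal.ofReal_le_ofReal
    have hpt : 0 < p.toReal :=
      ENNReal.toReal_pos h0 (ne_top_of_le_ne_top ENNReal.one_ne_top (hpq.trans hq))
    have hple : p.toReal ≤ q.toReal :=
      ENNReal.toReal_mono (ne_top_of_le_ne_top ENNReal.one_ne_top hq) hpq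
    have hq0 : 0 < q.toReal := lt_of_lt_of_le hpt hple
    have hmono : Real.logb 2 p.toReal ≤ Real.logb 2 q.toReal :=
      (Real.logb_le_logb one_lt_two hpt hq0).mpr hple
    linarith

lemma fiber_ent (D : Set (List A)) (hprop : IsProper D) (hasc : IsASC P D)
    {m : ℕ} {α : List A} (hα : α ∈ Tset D m) :
    entTerm (strProb P α) ≤ ∑' β : ↥{β ∈ D | α <+: β}, entTerm (strProb P β.1) := by
  calc entTerm (strProb P α)
      = strProb P α * ENNReal.ofReal (-(Real.logb 2 (strProb P α).toReal)) :=
        entTerm_eq (strProb_le_one P α)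
    _ ≤ (∑' β : ↥{β ∈ D | α <+: β}, strProb P β.1) *
        ENNReal.ofReal (-(Real.logb 2 (strProb P α).toReal)) :=
        mul_le_mul_left (key P D hprop hasc hα) _
    _ = ∑' β : ↥{β ∈ D | α <+: β},
        strProb P β.1 * ENNReal.ofReal (-(Real.logb 2 (strProb P α).toReal)) :=
        ENNReal.tsum_mul_right.symm
    _ ≤ ∑' β : ↥{β ∈ D | α <+: β}, entTerm (strProb P β.1) :=
        ENNReal.tsum_le_tsum fun β =>
          entTerm_ge (strProb_prefix_le P β.2.2) (strProb_le_one P α)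

lemma tset_ent_le (D : Set (List A)) (hprop : IsProper D) (hasc : IsASC P D) (m : ℕ) :
    dictEntropy P (Tset D m) ≤ dictEntropy P {β ∈ D | m < β.length} := by
  have hfib : ∀ (α : List A), α ∈ Tset D m → ∀ β ∈ {b ∈ D | α <+: b},
      β ∈ {b ∈ D | m < b.length} := by
    rintro α ⟨hαn, hαno⟩ β ⟨hβD, hαβ⟩
    refine ⟨hβD, ?_⟩
    have hle : m ≤ β.length := hαn ▸ hαβ.length_le
    rcases lt_or_eq_of_le hle with h | h
    · exact h
    · exfalso
      have : α = β := hαβ.eq_of_length (by omega)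
      exact hαno β hβD (this ▸ List.prefix_refl α)
  let f : (Σ α : ↥(Tset D m), ↥{b ∈ D | (α : List A) <+: b}) → ↥{b ∈ D | m < b.length} :=
    fun p => ⟨p.2.1, hfib p.1.1 p.1.2 p.2.1 p.2.2⟩
  have hinj : Function.Injective f := by
    rintro ⟨⟨α, hα⟩, ⟨β, hβ⟩⟩ ⟨⟨α', hα'⟩, ⟨β', hβ'⟩⟩ h
    have hb : β = β' := congrArg (fun x => x.1) h
    subst hb
    have ha : α = α' := by
      have t1 : α = β.take α.length := List.prefix_iff_eq_take.mp hβ.2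
      have t2 : α' = β.take α'.length := List.prefix_iff_eq_take.mp hβ'.2
      rw [t1, t2, hα.1, hα'.1]
    subst ha
    rfl
  calc dictEntropy P (Tset D m)
      ≤ ∑' α : ↥(Tset D m), ∑' β : ↥{b ∈ D | (α : List A) <+: b},
          entTerm (strProb P β.1) :=
        ENNReal.tsum_le_tsum fun α => fiber_ent P D hprop hasc α.2
    _ = ∑' p : Σ α : ↥(Tset D m), ↥{b ∈ D | (α : List A) <+: b},
          entTerm (strProb P p.2.1) :=
        (ENNReal.tsum_sigma' fun p : Σ α : ↥(Tset D m), ↥{b ∈ D | (α : List A) <+: b} =>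
          entTerm (strProb P p.2.1)).symm
    _ = ∑' p : Σ α : ↥(Tset D m), ↥{b ∈ D | (α : List A) <+: b},
          (fun b : ↥{b ∈ D | m < b.length} => entTerm (strProb P b.1)) (f p) := rfl
    _ ≤ dictEntropy P {b ∈ D | m < b.length} :=
        ENNReal.tsum_comp_le_tsum_of_injective hinj _

lemma dictEntropy_union (s t : Set (List A)) (hd : Disjoint s t) :
    dictEntropy P (s ∪ t) = dictEntropy P s + dictEntropy P t := by
  simp only [dictEntropy]
  exact Summable.tsum_union_disjoint (f := fun l => entTerm (strProb P l)) hd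
    ENNReal.summable ENNReal.summable

lemma dictEntropy_mono {s t : Set (List A)} (h : s ⊆ t) :
    dictEntropy P s ≤ dictEntropy P t := by
  simp only [dictEntropy]
  exact tsum_set_mono (fun l => entTerm (strProb P l)) h

lemma dn_upper (D : Set (List A)) (hprop : IsProper D) (hasc : IsASC P D) (m : ℕ) :
    dictEntropy P (Dn D m) ≤ dictEntropy P D := by
  have hDn : Dn D m = ({α ∈ D | α.length < m} ∪ {α ∈ D | α.length = m}) ∪ Tset D m := by
    rw [Dn, Dperp, Set.union_assoc]
  have hD : D = ({α ∈ D | α.length < m} ∪ {α ∈ D | α.length = m}) ∪ {α ∈ D | m < α.length} := by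
    ext α
    constructor
    · intro h
      rcases lt_trichotomy α.length m with h1 | h1 | h1
      · exact Or.inl (Or.inl ⟨h, h1⟩)
      · exact Or.inl (Or.inr ⟨h, h1⟩)
      · exact Or.inr ⟨h, h1⟩
    · rintro ((⟨h, _⟩ | ⟨h, _⟩) | ⟨h, _⟩) <;> exact h
  have hd1 : Disjoint ({α ∈ D | α.length < m} ∪ {α ∈ D | α.length = m}) (Tset D m) := by
    rw [Set.disjoint_left]
    rintro α (⟨hD', _⟩ | ⟨hD', _⟩) ⟨_, hno⟩ <;> exact hno α hD' (List.prefix_refl α)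
  have hd2 : Disjoint ({α ∈ D | α.length < m} ∪ {α ∈ D | α.length = m})
      {α ∈ D | m < α.length} := by
    rw [Set.disjoint_left]
    rintro α (⟨_, h1⟩ | ⟨_, h1⟩) ⟨_, h2⟩ <;> omega
  rw [hDn, dictEntropy_union P _ _ hd1]
  conv_rhs => rw [hD]
  rw [dictEntropy_union P _ _ hd2]
  exact add_le_add_right (tset_ent_le P D hprop hasc m) _

lemma dn_lower (D : Set (List A)) (m : ℕ) :
    dictEntropy P {α ∈ D | α.length < m} ≤ dictEntropy P (Dn D m) :=
  dictEntropy_mono P Set.subset_union_left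

lemma low_mono (D : Set (List A)) :
    Monotone (fun m => dictEntropy P {α ∈ D | α.length < m}) := by
  intro m m' h
  apply dictEntropy_mono
  rintro α ⟨h1, h2⟩
  exact ⟨h1, lt_of_lt_of_le h2 h⟩

lemma low_iSup (D : Set (List A)) :
    (⨆ m, dictEntropy P {α ∈ D | α.length < m}) = dictEntropy P D := by
  apply le_antisymm
  · exact iSup_le fun m => dictEntropy_mono P fun α h => h.1
  · rw [dictEntropy, tsum_subtype D (fun l => entTerm (strProb P l)), ENNReal.tsum_eq_iSup_sum]
    apply iSup_le
    intro s
    refine le_trans ?_ (le_iSup _ ((s.sup fun γ => γ.length) + 1))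
    have hle : ∀ γ ∈ s, D.indicator (fun l => entTerm (strProb P l)) γ ≤
        ({α ∈ D | α.length < (s.sup fun γ => γ.length) + 1}).indicator
          (fun l => entTerm (strProb P l)) γ := by
      intro γ hγ
      by_cases hγD : γ ∈ D
      · rw [Set.indicator_of_mem hγD,
          Set.indicator_of_mem (show γ ∈ {α ∈ D | α.length < (s.sup fun γ => γ.length) + 1}
            from ⟨hγD, Nat.lt_succ_of_le (Finset.le_sup hγ)⟩)]
      · rw [Set.indicator_of_notMem hγD]; exact zero_le
    calc ∑ γ ∈ s, D.indicator (fun l => entTerm (strProb P l)) γ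
        ≤ ∑ γ ∈ s, ({α ∈ D | α.length < (s.sup fun γ => γ.length) + 1}).indicator
            (fun l => entTerm (strProb P l)) γ := Finset.sum_le_sum hle
      _ ≤ ∑' γ, ({α ∈ D | α.length < (s.sup fun γ => γ.length) + 1}).indicator
            (fun l => entTerm (strProb P l)) γ := ENNReal.sum_le_tsum s
      _ = dictEntropy P {α ∈ D | α.length < (s.sup fun γ => γ.length) + 1} :=
          (tsum_subtype _ _).symm


theorem dictEntropy_Dn_sandwich_and_tendsto' {A : Type*} [Countable A]
    (P : PMF A) (D : Set (List A)) (hdict : IsDictionary D)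
    (hprop : IsProper D) (hasc : IsASC P D) :
    (∀ m : ℕ, 0 < m →
      dictEntropy P {α ∈ D | α.length < m} ≤ dictEntropy P (Dn D m) ∧
      dictEntropy P (Dn D m) ≤ dictEntropy P D) ∧
    Tendsto (fun m : ℕ => dictEntropy P (Dn D m)) atTop
      (nhds (dictEntropy P D)) := by
  refine ⟨fun m _ => ⟨dn_lower P D m, dn_upper P D hprop hasc m⟩, ?_⟩
  have hlow : Tendsto (fun m => dictEntropy P {α ∈ D | α.length < m}) atTop
      (nhds (dictEntropy P D)) := by
    rw [← low_iSup P D]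
    exact tendsto_atTop_iSup (low_mono P D)
  exact tendsto_of_tendsto_of_tendsto_of_le_of_le hlow tendsto_const_nhds
    (fun m => dn_lower P D m) (fun m => dn_upper P D hprop hasc m)
end StrProbAux

/-- If `D` is proper and almost surely complete then, for
every positive integer `m`,
`-∑_{α∈D,|α|<m} P(α) log₂ P(α) ≤ H(D_m) ≤ H(D)`, and consequently
`lim_{m→∞} H(D_m) = H(D)`. -/


theorem dictEntropy_Dn_sandwich_and_tendsto {A : Type*} [Countable A]
    (P : PMF A) (D : Set (List A)) (hdict : IsDictionary D)
    (hprop : IsProper D) (hasc : IsASC P D) :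
    (∀ m : ℕ, 0 < m →
      dictEntropy P {α ∈ D | α.length < m} ≤ dictEntropy P (Dn D m) ∧
      dictEntropy P (Dn D m) ≤ dictEntropy P D) ∧
    Tendsto (fun m : ℕ => dictEntropy P (Dn D m)) atTop
      (nhds (dictEntropy P D)) :=
  dictEntropy_Dn_sandwich_and_tendsto' P D hdict hprop hasc
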